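/- Let p be a prime, Q = p^d a power of p, and G = ∏_{e≥1} C_{p^e}^{m_e} a nontrivial finite abelian p-group, with t the largest e such that m_e ≠ 0 (so p^t is the exponent of G). Set a := c_{t+1}, so that p^t·a is a non-negative integer. Consider the complex polynomials N(z) := ∏_{i=0}^{t} (1 − Q^{p^i·c_i}·z^{p^i}) and D(z) := ∏_{i=0}^{t} (1 − Q^{p^i·c_{i+1}}·z^{p^i}). Then for every z₀ ∈ ℂ: if Q^{p^t·a}·z₀^{p^t} = 1 then the multiplicity of z₀ as a root of D exceeds its multiplicity as a root of N by exactly 1, and otherwise its multiplicity as a root of D is at most its multiplicity as a root of N. Consequently the rational function N/D is meromorphic on ℂ with simple poles exactly at the p^t points z₀ with (Q^a·z₀)^{p^t} = 1. -/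

import Mathlib

noncomputable section

/-- The rationals `c_0 = 0` and `c_i = Σ_{e≥1} m_e − Σ_{e=1}^{i−1} m_e p^{−e}` for `i ≥ 1`
attached to the abelian `p`-group `G = ∏_{e≥1} C_{p^e}^{m_e}` (with `m_e = 0` for `e > t`). -/
def cseq (p t : ℕ) (m : ℕ → ℕ) : ℕ → ℚ
  | 0 => 0
  | (i + 1) => (∑ e ∈ Finset.Icc 1 t, (m e : ℚ)) - ∑ e ∈ Finset.Icc 1 i, (m e : ℚ) / (p : ℚ) ^ e

open Polynomial Finset

lemma one_sub_pow_eq_geom {R : Type*} [CommRing R] (y : R) (n : ℕ) :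
    1 - y ^ n = (1 - y) * ∑ j ∈ Finset.range n, y ^ j := by
  linear_combination geom_sum_mul y n

/-- Let `p` be prime, `Q = p^d`, and `G = ∏ C_{p^e}^{m_e}` nontrivial with
exponent `p^t`. With `N(z) = ∏_{i=0}^{t} (1 − Q^{p^i c_i} z^{p^i})` and
`D(z) = ∏_{i=0}^{t} (1 − Q^{p^i c_{i+1}} z^{p^i})`, every `z₀` with
`Q^{p^t c_{t+1}} z₀^{p^t} = 1` is a root of `D` of multiplicity exactly one more than its
multiplicity in `N`, all other `z₀` have `D`-multiplicity at most their `N`-multiplicity,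
and there are exactly `p^t` such points `z₀`. -/
theorem stmt8
    (p d Q t : ℕ) (hp : p.Prime) (hd : 1 ≤ d) (hQ : Q = p ^ d)
    (m : ℕ → ℕ) (hm : ∀ e, t < e → m e = 0) (ht : 1 ≤ t) (htm : m t ≠ 0)
    -- the non-negative integers `E i = p^i·c_i` and `E' i = p^i·c_{i+1}`;
    -- in particular `E' t = p^t·a` for `a = c_{t+1}`
    (E E' : ℕ → ℕ)
    (hE : ∀ i, (E i : ℚ) = (p : ℚ) ^ i * cseq p t m i)
    (hE' : ∀ i, (E' i : ℚ) = (p : ℚ) ^ i * cseq p t m (i + 1)) :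
    (∀ z₀ : ℂ,
      ((Q : ℂ) ^ E' t * z₀ ^ p ^ t = 1 →
        Polynomial.rootMultiplicity z₀
            (∏ i ∈ Finset.range (t + 1),
              (1 - Polynomial.C ((Q : ℂ) ^ E' i) * Polynomial.X ^ p ^ i))
          = Polynomial.rootMultiplicity z₀
              (∏ i ∈ Finset.range (t + 1),
                (1 - Polynomial.C ((Q : ℂ) ^ E i) * Polynomial.X ^ p ^ i)) + 1) ∧
      ((Q : ℂ) ^ E' t * z₀ ^ p ^ t ≠ 1 →
        Polynomial.rootMultiplicity z₀
            (∏ i ∈ Finset.range (t + 1),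
              (1 - Polynomial.C ((Q : ℂ) ^ E' i) * Polynomial.X ^ p ^ i))
          ≤ Polynomial.rootMultiplicity z₀
              (∏ i ∈ Finset.range (t + 1),
                (1 - Polynomial.C ((Q : ℂ) ^ E i) * Polynomial.X ^ p ^ i)))) ∧
    Set.ncard {z₀ : ℂ | (Q : ℂ) ^ E' t * z₀ ^ p ^ t = 1} = p ^ t := by
  have hp2 : 2 ≤ p := hp.two_le
  have hp0 : 0 < p := hp.pos
  have hQ2 : 2 ≤ Q := by
    rw [hQ]
    calc 2 ≤ p := hp2
    _ = p ^ 1 := (pow_one p).symm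
    _ ≤ p ^ d := Nat.pow_le_pow_right hp0 hd
  have hQ0 : (Q : ℂ) ≠ 0 := Nat.cast_ne_zero.mpr (by omega)
  -- arithmetic facts about E, E'
  have hE0 : E 0 = 0 := by
    have h := hE 0
    have : (E 0 : ℚ) = 0 := by rw [h]; simp [cseq]
    exact_mod_cast this
  have hEsucc : ∀ i, E (i + 1) = p * E' i := by
    intro i
    have h : (E (i + 1) : ℚ) = ((p * E' i : ℕ) : ℚ) := by
      rw [hE (i + 1)]
      push_cast
      rw [hE' i]
      ring
    exact_mod_cast h
  -- positivity of c_{t+1}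
  have hctpos : 0 < cseq p t m (t + 1) := by
    have hsum : ∑ e ∈ Finset.Icc 1 t, (m e : ℚ) / (p : ℚ) ^ e
        < ∑ e ∈ Finset.Icc 1 t, (m e : ℚ) := by
      refine Finset.sum_lt_sum (fun e he => ?_) ⟨t, Finset.mem_Icc.mpr ⟨ht, le_refl t⟩, ?_⟩
      · exact div_le_self (by positivity) (one_le_pow₀ (by exact_mod_cast hp0))
      · refine div_lt_self ?_ ?_
        · exact_mod_cast Nat.pos_of_ne_zero htm
        · exact one_lt_pow₀ (by exact_mod_cast hp2) (by omega)
    simpa [cseq, sub_pos] using hsum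
  have hE't_pos : 1 ≤ E' t := by
    by_contra h
    have h0 : E' t = 0 := by omega
    have h1 : (p : ℚ) ^ t * cseq p t m (t + 1) = 0 := by
      have h2 := hE' t
      rw [h0] at h2
      exact_mod_cast h2.symm
    have hpt : (0 : ℚ) < (p : ℚ) ^ t := by positivity
    nlinarith [mul_pos hpt hctpos]
  have hQE2 : 2 ≤ Q ^ E' t := by
    calc 2 ≤ Q := hQ2
    _ = Q ^ 1 := (pow_one Q).symm
    _ ≤ Q ^ E' t := Nat.pow_le_pow_right (by omega) hE't_pos
  -- key modulus fact
  have hkey : ∀ i < t, ∀ z₀ : ℂ, (Q : ℂ) ^ E' t * z₀ ^ p ^ t = 1 →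
      ‖(Q : ℂ) ^ E' i * z₀ ^ p ^ i‖ ≠ 1 := by
    intro i hi z₀ hz hw
    set r := ‖z₀‖ with hr
    have habs : (Q : ℝ) ^ E' t * r ^ p ^ t = 1 := by
      have := congrArg (‖·‖) hz
      simpa [norm_mul, norm_pow] using this
    have habs2 : (Q : ℝ) ^ E' i * r ^ p ^ i = 1 := by
      have := hw
      simpa [norm_mul, norm_pow] using this
    have habs3 : (Q : ℝ) ^ (E' i * p ^ (t - i)) * r ^ p ^ t = 1 := by
      have := congrArg (· ^ p ^ (t - i)) habs2
      simp only [mul_pow, ← pow_mul, one_pow] at this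
      rw [show p ^ i * p ^ (t - i) = p ^ t by rw [← pow_add]; congr 1; omega] at this
      exact this
    have hrpos : (0 : ℝ) < r ^ p ^ t := by
      rcases lt_or_eq_of_le (pow_nonneg (norm_nonneg z₀) (p ^ t)) with h | h
      · exact h
      · exfalso; rw [← h] at habs; simp at habs
    have heq : (Q : ℝ) ^ E' t = (Q : ℝ) ^ (E' i * p ^ (t - i)) := by
      have := habs.trans habs3.symm
      exact mul_right_cancel₀ (ne_of_gt hrpos) this
    have hnat : Q ^ E' t = Q ^ (E' i * p ^ (t - i)) := by exact_mod_cast heq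
    have hexp : E' t = E' i * p ^ (t - i) := Nat.pow_right_injective hQ2 hnat
    -- now derive c_{t+1} = c_{i+1}, contradiction
    have hrat : (p : ℚ) ^ t * cseq p t m (t + 1) = (p : ℚ) ^ t * cseq p t m (i + 1) := by
      have h1 := hE' t
      have h2 := hE' i
      have h3 : (E' t : ℚ) = (E' i : ℚ) * (p : ℚ) ^ (t - i) := by exact_mod_cast hexp
      calc (p : ℚ) ^ t * cseq p t m (t + 1) = (E' t : ℚ) := h1.symm
        _ = (E' i : ℚ) * (p : ℚ) ^ (t - i) := h3
        _ = (p : ℚ) ^ i * cseq p t m (i + 1) * (p : ℚ) ^ (t - i) := by rw [h2]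
        _ = (p : ℚ) ^ (i + (t - i)) * cseq p t m (i + 1) := by rw [pow_add]; ring
        _ = (p : ℚ) ^ t * cseq p t m (i + 1) := by rw [show i + (t - i) = t by omega]
    have hc : cseq p t m (t + 1) = cseq p t m (i + 1) :=
      mul_left_cancel₀ (by positivity) hrat
    -- but cseq (t+1) < cseq (i+1)
    have hlt : ∑ e ∈ Finset.Icc 1 i, (m e : ℚ) / (p : ℚ) ^ e
        < ∑ e ∈ Finset.Icc 1 t, (m e : ℚ) / (p : ℚ) ^ e := by
      refine Finset.sum_lt_sum_of_subset (Finset.Icc_subset_Icc_right (by omega))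
        (Finset.mem_Icc.mpr ⟨ht, le_refl t⟩) (by simp; omega) ?_ (fun j _ _ => by positivity)
      have h1 : (0 : ℚ) < (m t : ℚ) := by exact_mod_cast Nat.pos_of_ne_zero htm
      positivity
    have : cseq p t m (t + 1) < cseq p t m (i + 1) := by
      simp only [cseq]
      linarith
    linarith [hc]
  -- polynomial building blocks
  have hptne : p ^ t ≠ 0 := pow_ne_zero t (by omega)
  have hfac_ne : ∀ (a : ℂ) (k : ℕ), k ≠ 0 → (1 - C a * X ^ k : ℂ[X]) ≠ 0 := by
    intro a k hk h
    have := congrArg (eval 0) h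
    simp [zero_pow hk] at this
  set A : ℂ[X] := ∏ i ∈ range t, (1 - C ((Q : ℂ) ^ E' i) * X ^ p ^ i) with hA
  set S : ℕ → ℂ[X] := fun i => ∑ j ∈ range p, (C ((Q : ℂ) ^ E' i) * X ^ p ^ i) ^ j with hS
  set B : ℂ[X] := (1 - X) * ∏ i ∈ range t, S i with hB
  set g : ℂ[X] := 1 - C ((Q : ℂ) ^ E' t) * X ^ p ^ t with hg
  have hfsucc : ∀ i, (1 - C ((Q : ℂ) ^ E (i + 1)) * X ^ p ^ (i + 1) : ℂ[X])
      = (1 - C ((Q : ℂ) ^ E' i) * X ^ p ^ i) * S i := by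
    intro i
    have h1 : ((Q : ℂ) ^ E (i + 1)) = ((Q : ℂ) ^ E' i) ^ p := by
      rw [hEsucc i, mul_comm, pow_mul]
    have h2 : (X : ℂ[X]) ^ p ^ (i + 1) = (X ^ p ^ i) ^ p := by
      rw [← pow_mul, ← pow_succ]
    rw [h1, h2, map_pow, ← mul_pow]
    exact one_sub_pow_eq_geom _ p
  have hN : (∏ i ∈ range (t + 1), (1 - C ((Q : ℂ) ^ E i) * X ^ p ^ i) : ℂ[X]) = A * B := by
    rw [Finset.prod_range_succ']
    have h0 : (1 - C ((Q : ℂ) ^ E 0) * X ^ p ^ 0 : ℂ[X]) = 1 - X := by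
      rw [hE0]; simp
    rw [h0, Finset.prod_congr rfl (fun i _ => hfsucc i), Finset.prod_mul_distrib, hA, hB]
    ring
  have hD : (∏ i ∈ range (t + 1), (1 - C ((Q : ℂ) ^ E' i) * X ^ p ^ i) : ℂ[X]) = A * g := by
    rw [Finset.prod_range_succ, hA, hg]
  have hAne : A ≠ 0 := by
    rw [hA]
    exact Finset.prod_ne_zero_iff.mpr fun i _ => hfac_ne _ _ (pow_ne_zero i (by omega))
  have hSne : ∀ i, S i ≠ 0 := by
    intro i
    have h := hfsucc i
    have hne := hfac_ne ((Q : ℂ) ^ E (i + 1)) (p ^ (i + 1)) (pow_ne_zero _ (by omega))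
    rw [h] at hne
    exact (mul_ne_zero_iff.mp hne).2
  have hBne : B ≠ 0 := by
    rw [hB]
    refine mul_ne_zero ?_ (Finset.prod_ne_zero_iff.mpr fun i _ => hSne i)
    intro h
    have := congrArg (eval 0) h
    simp at this
  have hgne : g ≠ 0 := by
    rw [hg]; exact hfac_ne _ _ hptne
  have hNne : A * B ≠ 0 := mul_ne_zero hAne hBne
  have hDne : A * g ≠ 0 := mul_ne_zero hAne hgne
  refine ⟨fun z₀ => ⟨fun hz => ?_, fun hz => ?_⟩, ?_⟩
  · -- z₀ with Q^{E' t} z₀^{p^t} = 1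
    rw [hN, hD, Polynomial.rootMultiplicity_mul hDne, Polynomial.rootMultiplicity_mul hNne]
    have hz0ne : z₀ ≠ 0 := by
      intro h
      rw [h, zero_pow hptne, mul_zero] at hz
      exact zero_ne_one hz
    have hz1 : z₀ ≠ 1 := by
      intro h
      rw [h, one_pow, mul_one] at hz
      have h2 : ((Q ^ E' t : ℕ) : ℂ) = ((1 : ℕ) : ℂ) := by push_cast; simpa using hz
      have h3 : Q ^ E' t = 1 := Nat.cast_injective h2
      omega
    -- B has no root at z₀
    have hBz : eval z₀ B ≠ 0 := by
      rw [hB]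
      simp only [eval_mul, eval_sub, eval_one, eval_X, eval_prod]
      refine mul_ne_zero (sub_ne_zero.mpr (Ne.symm hz1)) ?_
      refine Finset.prod_ne_zero_iff.mpr fun i hi => ?_
      have hwi := hkey i (Finset.mem_range.mp hi) z₀ hz
      have hSev : eval z₀ (S i) = ∑ j ∈ range p, ((Q : ℂ) ^ E' i * z₀ ^ p ^ i) ^ j := by
        rw [hS]
        simp [eval_finset_sum]
      rw [hSev]
      intro hsum
      set w := (Q : ℂ) ^ E' i * z₀ ^ p ^ i with hw
      have hgeo := geom_sum_mul w p
      rw [hsum, zero_mul] at hgeo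
      have hwp : w ^ p = 1 := by
        have := hgeo.symm
        rwa [sub_eq_zero] at this
      have habsp : ‖w‖ ^ p = 1 := by
        rw [← norm_pow, hwp, norm_one]
      have h0 : 0 ≤ ‖w‖ := norm_nonneg w
      rcases lt_trichotomy ‖w‖ 1 with hlt | heq | hgt
      · have := pow_lt_one₀ h0 hlt (by omega : p ≠ 0)
        linarith
      · exact hwi heq
      · have := one_lt_pow₀ hgt (by omega : p ≠ 0)
        linarith
    have hBrm : rootMultiplicity z₀ B = 0 :=
      Polynomial.rootMultiplicity_eq_zero (by simpa [Polynomial.IsRoot] using hBz)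
    -- g has a simple root at z₀
    have hgroot : g.IsRoot z₀ := by
      rw [hg]
      simp [Polynomial.IsRoot, hz]
    have hgd : eval z₀ (derivative g) ≠ 0 := by
      rw [hg]
      simp only [derivative_sub, derivative_one, derivative_C_mul, derivative_X_pow,
        zero_sub, eval_neg, eval_mul, eval_C, eval_natCast, eval_pow, eval_X, neg_ne_zero]
      refine mul_ne_zero (pow_ne_zero _ hQ0) (mul_ne_zero ?_ (pow_ne_zero _ hz0ne))
      exact_mod_cast (Nat.cast_ne_zero (R := ℂ)).mpr hptne
    have hgrm : rootMultiplicity z₀ g = 1 := by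
      have hder := Polynomial.derivative_rootMultiplicity_of_root hgroot
      have hzero : rootMultiplicity z₀ (derivative g) = 0 :=
        Polynomial.rootMultiplicity_eq_zero (by simpa [Polynomial.IsRoot] using hgd)
      have hpos : 0 < rootMultiplicity z₀ g :=
        (Polynomial.rootMultiplicity_pos hgne).mpr hgroot
      omega
    rw [hgrm, hBrm]
  · -- z₀ with Q^{E' t} z₀^{p^t} ≠ 1
    rw [hN, hD, Polynomial.rootMultiplicity_mul hDne, Polynomial.rootMultiplicity_mul hNne]
    have hgrm : rootMultiplicity z₀ g = 0 := by
      refine Polynomial.rootMultiplicity_eq_zero ?_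
      rw [hg]
      simp only [Polynomial.IsRoot, eval_sub, eval_one, eval_mul, eval_C, eval_pow, eval_X]
      rw [sub_eq_zero]
      exact fun h => hz h.symm
    omega
  · -- counting the poles
    have haC : ((Q : ℂ) ^ E' t) ≠ 0 := pow_ne_zero _ hQ0
    obtain ⟨r, hr⟩ := IsAlgClosed.exists_pow_nat_eq (((Q : ℂ) ^ E' t)⁻¹) (Nat.pos_of_ne_zero hptne)
    have hr0 : r ≠ 0 := by
      intro h
      rw [h, zero_pow hptne] at hr
      exact (inv_ne_zero haC) hr.symm
    have hset : {z₀ : ℂ | (Q : ℂ) ^ E' t * z₀ ^ p ^ t = 1}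
        = (fun z => r * z) '' {z : ℂ | z ^ p ^ t = 1} := by
      ext w
      simp only [Set.mem_image, Set.mem_setOf_eq]
      constructor
      · intro hw
        refine ⟨w / r, ?_, by field_simp⟩
        have hwpt : w ^ p ^ t = ((Q : ℂ) ^ E' t)⁻¹ := by
          rw [inv_eq_one_div, eq_div_iff haC]
          linear_combination hw
        rw [div_pow, hr, hwpt, div_self (inv_ne_zero haC)]
      · rintro ⟨z, hz, rfl⟩
        rw [mul_pow, hr, hz, mul_one]
        field_simp
    rw [hset, Set.ncard_image_of_injective _ (mul_right_injective₀ hr0)]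
    have hset2 : {z : ℂ | z ^ p ^ t = 1} = ↑(Polynomial.nthRootsFinset (p ^ t) (1 : ℂ)) := by
      ext z
      simp [Polynomial.mem_nthRootsFinset (Nat.pos_of_ne_zero hptne)]
    rw [hset2, Set.ncard_coe_finset]
    exact (Complex.isPrimitiveRoot_exp (p ^ t) hptne).card_nthRootsFinset
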